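/- Let (φ,Q,ξ,η,g) be a weak contact metric structure on M, let X be a smooth vector field on M, and set f := η(X) (a smooth function on M). Then X is a weak contact vector field — i.e., there exists a smooth function σ : M → ℝ with X(η(Y)) - η([X,Y]) = σ·η(Y) for all smooth vector fields Y — if and only if g(QX, Y) = ½·(φY)(f) + ν·f·η(Y) for all smooth vector fields Y (equivalently, QX = -½·φ(∇f) + ν·f·ξ, where ∇f is the g-gradient of f). In this case σ = ξ(f); in particular, X is a strict weak contact vector field (σ ≡ 0) if and only if ξ(f) ≡ 0. -/

import Mathlib

open scoped Manifold

noncomputable section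

/-- Smooth vector fields on a manifold `M`, modelled as derivations of the algebra of smooth
real-valued functions on `M`. -/
abbrev VectorField {E : Type*} [NormedAddCommGroup E] [NormedSpace ℝ E]
    {H : Type*} [TopologicalSpace H] (I : ModelWithCorners ℝ E H)
    (M : Type*) [TopologicalSpace M] [ChartedSpace H M] :=
  Derivation ℝ C^(⊤ : ℕ∞)⟮I, M; ℝ⟯ C^(⊤ : ℕ∞)⟮I, M; ℝ⟯

variable {E : Type*} [NormedAddCommGroup E] [NormedSpace ℝ E]
  {H : Type*} [TopologicalSpace H] {I : ModelWithCorners ℝ E H}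
  {M : Type*} [TopologicalSpace M] [ChartedSpace H M]

/-- `dη(X,Y) = ½ (X(η(Y)) - Y(η(X)) - η([X,Y]))`. -/
def dEta (η : VectorField I M →ₗ[C^(⊤ : ℕ∞)⟮I, M; ℝ⟯] C^(⊤ : ℕ∞)⟮I, M; ℝ⟯)
    (X Y : VectorField I M) : C^(⊤ : ℕ∞)⟮I, M; ℝ⟯ :=
  (2 : ℝ)⁻¹ • (X (η Y) - Y (η X) - η ⁅X, Y⁆)

/-- The Nijenhuis torsion `[φ,φ](X,Y) = φ²[X,Y] + [φX,φY] - φ[φX,Y] - φ[X,φY]`. -/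
def nijenhuis (φ : VectorField I M → VectorField I M) (X Y : VectorField I M) :
    VectorField I M :=
  φ (φ ⁅X, Y⁆) + ⁅φ X, φ Y⁆ - φ ⁅φ X, Y⁆ - φ ⁅X, φ Y⁆

/-- `N⁽¹⁾(X,Y) = [φ,φ](X,Y) + 2 dη(X,Y) Qξ`. -/
def N1 (φ Q : VectorField I M →ₗ[C^(⊤ : ℕ∞)⟮I, M; ℝ⟯] VectorField I M)
    (ξ : VectorField I M) (η : VectorField I M →ₗ[C^(⊤ : ℕ∞)⟮I, M; ℝ⟯] C^(⊤ : ℕ∞)⟮I, M; ℝ⟯)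
    (X Y : VectorField I M) : VectorField I M :=
  nijenhuis ⇑φ X Y + ((2 : ℝ) • dEta η X Y) • Q ξ

/-- `N⁽²⁾(X,Y) = (φX)(η(Y)) - η([φX,Y]) - (φY)(η(X)) + η([φY,X])`. -/
def N2 (φ : VectorField I M →ₗ[C^(⊤ : ℕ∞)⟮I, M; ℝ⟯] VectorField I M)
    (η : VectorField I M →ₗ[C^(⊤ : ℕ∞)⟮I, M; ℝ⟯] C^(⊤ : ℕ∞)⟮I, M; ℝ⟯)
    (X Y : VectorField I M) : C^(⊤ : ℕ∞)⟮I, M; ℝ⟯ :=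
  (φ X) (η Y) - η ⁅φ X, Y⁆ - (φ Y) (η X) + η ⁅φ Y, X⁆

set_option maxHeartbeats 2000000 in
theorem weak_contact_vector_field_characterization
    [FiniteDimensional ℝ E] [I.Boundaryless] [IsManifold I (⊤ : ℕ∞) M]
    (n : ℕ) (hn : 1 ≤ n) (hdim : Module.finrank ℝ E = 2 * n + 1)
    (φ Q : VectorField I M →ₗ[C^(⊤ : ℕ∞)⟮I, M; ℝ⟯] VectorField I M)
    (hQ : Function.Bijective Q)
    (ξ : VectorField I M)
    (η : VectorField I M →ₗ[C^(⊤ : ℕ∞)⟮I, M; ℝ⟯] C^(⊤ : ℕ∞)⟮I, M; ℝ⟯)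
    (g : VectorField I M →ₗ[C^(⊤ : ℕ∞)⟮I, M; ℝ⟯] VectorField I M →ₗ[C^(⊤ : ℕ∞)⟮I, M; ℝ⟯] C^(⊤ : ℕ∞)⟮I, M; ℝ⟯)
    (ν : ℝ) (hν : 0 < ν)
    (hφφ : ∀ X, φ (φ X) = -(Q X) + η X • Q ξ)
    (hηξ : η ξ = 1)
    (hQξ : Q ξ = ν • ξ)
    (hD : ∀ X, η X = 0 → η (φ X) = 0)
    (hg_symm : ∀ X Y, g X Y = g Y X)
    (hg_pos : ∀ X (x : M), 0 ≤ g X X x)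
    (hg_def : ∀ X, g X X = 0 → X = 0)
    (hcompat : ∀ X Y, g (φ X) (φ Y) = g X (Q Y) - η X * η (Q Y))
    (hcontact : ∀ X Y, g X (φ Y) = dEta η X Y)
    (X : VectorField I M)
    :
    ((∃ σ : C^(⊤ : ℕ∞)⟮I, M; ℝ⟯, ∀ Y, X (η Y) - η ⁅X, Y⁆ = σ * η Y) ↔
      (∀ Y, g (Q X) Y = (2 : ℝ)⁻¹ • ((φ Y) (η X)) + ν • (η X * η Y))) ∧
    (∀ σ : C^(⊤ : ℕ∞)⟮I, M; ℝ⟯, (∀ Y, X (η Y) - η ⁅X, Y⁆ = σ * η Y) → σ = ξ (η X)) ∧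
    ((∃ σ : C^(⊤ : ℕ∞)⟮I, M; ℝ⟯, ∀ Y, X (η Y) - η ⁅X, Y⁆ = σ * η Y) →
      ((∀ Y, X (η Y) - η ⁅X, Y⁆ = 0) ↔ ξ (η X) = 0)) := by
  classical
  set f := η X with hf
  have h2half : (2 : ℝ) * (2 : ℝ)⁻¹ = 1 := by norm_num
  -- η vanishes on W - η W • ξ
  have hker : ∀ W : VectorField I M, η (W - η W • ξ) = 0 := by
    intro W
    rw [map_sub, map_smul, hηξ, smul_eq_mul, mul_one, sub_self]
  -- η ∘ Q = ν • η
  have hηQ0 : ∀ W, η W = 0 → η (Q W) = 0 := by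
    intro W hW
    have h1 : η (φ W) = 0 := hD W hW
    have h2 : η (φ (φ W)) = 0 := hD _ h1
    rw [hφφ W, hW, zero_smul, add_zero, map_neg, neg_eq_zero] at h2
    exact h2
  have hηQ : ∀ W, η (Q W) = ν • η W := by
    intro W
    have h0 := hηQ0 _ (hker W)
    have hd : Q W = Q (W - η W • ξ) + η W • Q ξ := by
      rw [map_sub, map_smul]; abel
    rw [hd, map_add, h0, zero_add, map_smul, hQξ,
      LinearMap.map_smul_of_tower η ν ξ, hηξ, smul_comm, smul_eq_mul, mul_one]
  -- Q is g-self-adjoint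
  have hQsym : ∀ A B, g (Q A) B = g A (Q B) := by
    intro A B
    have h1 := hcompat A B
    have h2 := hcompat B A
    rw [hg_symm (φ A) (φ B)] at h1
    have h3 : g A (Q B) - η A * η (Q B) = g B (Q A) - η B * η (Q A) :=
      h1.symm.trans h2
    rw [hηQ, hηQ] at h3
    have hmu : η A * ν • η B = η B * ν • η A := by
      rw [mul_smul_comm, mul_smul_comm, mul_comm]
    rw [hmu, sub_left_inj] at h3
    rw [hg_symm (Q A) B]
    exact h3.symm
  -- antisymmetry of g(·, φ·)
  have hanti : ∀ A B, g A (φ B) = -(g B (φ A)) := by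
    intro A B
    rw [hcontact, hcontact]
    unfold dEta
    rw [← lie_skew A B, map_neg, ← smul_neg]
    congr 1
    abel
  -- φ ξ = 0
  have hφφξ : φ (φ ξ) = 0 := by
    rw [hφφ ξ, hηξ, one_smul]; abel
  have hgφξ : ∀ Z, g (φ ξ) (φ Z) = 0 := by
    intro Z
    rw [hanti (φ ξ) Z, hφφξ, map_zero, neg_zero]
  have hφξ : φ ξ = 0 := hg_def _ (hgφξ ξ)
  -- η ∘ φ = 0
  have hηφ : ∀ W, η (φ W) = 0 := by
    intro W
    have hW : φ W = φ (W - η W • ξ) := by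
      rw [map_sub, map_smul, hφξ, smul_zero, sub_zero]
    rw [hW]
    exact hD _ (hker W)
  -- g ξ Z = η Z
  have hgξQ : ∀ W, g ξ (Q W) = ν • η W := by
    intro W
    have h := hcompat ξ W
    rw [hφξ, map_zero, LinearMap.zero_apply, hηξ, hηQ, one_mul] at h
    have := h.symm
    rwa [sub_eq_zero] at this
  have hgξ : ∀ Z, g ξ Z = η Z := by
    intro Z
    obtain ⟨W, rfl⟩ := hQ.2 Z
    rw [hgξQ, hηQ]
  have hgXξ : g X ξ = f := by rw [hg_symm, hgξ, hf]
  -- key identity for the Lie-derivative expression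
  have hL : ∀ Y, X (η Y) - η ⁅X, Y⁆ = (2 : ℝ) • g X (φ Y) + Y f := by
    intro Y
    rw [hcontact]
    unfold dEta
    rw [smul_smul, h2half, one_smul, hf]
    abel
  -- decomposition of Q
  have hQd : ∀ Y, Q Y = -(φ (φ Y)) + η Y • Q ξ := by
    intro Y
    rw [hφφ Y]; abel
  -- scalar shuffling lemma
  have hsc : ∀ (a b : C^(⊤ : ℕ∞)⟮I, M; ℝ⟯), a • (ν • b) = ν • (b * a) := by
    intro a b
    rw [smul_comm, smul_eq_mul, mul_comm]
  -- halving lemma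
  have hhalf : ∀ a b : C^(⊤ : ℕ∞)⟮I, M; ℝ⟯, (2 : ℝ) • a = b → a = (2 : ℝ)⁻¹ • b := by
    intro a b hab
    have h1 : (2 : ℝ)⁻¹ * 2 = 1 := by norm_num
    rw [← hab, smul_smul, h1, one_smul]
  -- σ is necessarily ξ f
  have part2 : ∀ σ : C^(⊤ : ℕ∞)⟮I, M; ℝ⟯, (∀ Y, X (η Y) - η ⁅X, Y⁆ = σ * η Y) → σ = ξ (η X) := by
    intro σ hσ
    have h := hσ ξ
    rw [hL ξ, hφξ, map_zero, smul_zero, zero_add, hηξ, mul_one, hf] at h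
    exact h.symm
  -- forward direction
  have fwd : (∃ σ : C^(⊤ : ℕ∞)⟮I, M; ℝ⟯, ∀ Y, X (η Y) - η ⁅X, Y⁆ = σ * η Y) →
      (∀ Y, g (Q X) Y = (2 : ℝ)⁻¹ • ((φ Y) (η X)) + ν • (η X * η Y)) := by
    rintro ⟨σ, hσ⟩ Y
    have key : ∀ Z, (2 : ℝ) • g X (φ Z) = σ * η Z - Z f := by
      intro Z
      have h := hσ Z
      rw [hL Z] at h
      exact eq_sub_of_add_eq h
    have key2 : g X (φ (φ Y)) = (2 : ℝ)⁻¹ • (-((φ Y) f)) := by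
      apply hhalf
      have h := key (φ Y)
      rwa [hηφ, mul_zero, zero_sub] at h
    rw [hQsym X Y, hQd Y, map_add, map_neg, map_smul, key2, hQξ,
      LinearMap.map_smul_of_tower (g X) ν ξ, hgXξ, hsc, smul_neg, neg_neg, hf]
  -- backward direction
  have bwd : (∀ Y, g (Q X) Y = (2 : ℝ)⁻¹ • ((φ Y) (η X)) + ν • (η X * η Y)) →
      (∃ σ : C^(⊤ : ℕ∞)⟮I, M; ℝ⟯, ∀ Y, X (η Y) - η ⁅X, Y⁆ = σ * η Y) := by
    intro hB
    refine ⟨ξ f, ?_⟩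
    have key2 : ∀ Z, g X (φ (φ Z)) = -((2 : ℝ)⁻¹ • ((φ Z) f)) := by
      intro Z
      have h := hB Z
      rw [hQsym X Z, hQd Z, map_add, map_neg, map_smul, hQξ,
        LinearMap.map_smul_of_tower (g X) ν ξ, hgXξ, hsc, ← hf, add_left_inj] at h
      rw [← neg_neg (g X (φ (φ Z))), h]
    have main : ∀ Y, (2 : ℝ) • g X (φ Y) = ξ f * η Y - Y f := by
      intro Y
      obtain ⟨Z, hZ⟩ := hQ.2 (Y - η Y • ξ)
      have hηZ : η Z = 0 := by
        have h0 : ν • η Z = 0 := by rw [← hηQ, hZ, hker]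
        rcases smul_eq_zero.mp h0 with h | h
        · exact absurd h hν.ne'
        · exact h
      have hφφZ : φ (φ Z) = -(Y - η Y • ξ) := by
        rw [hφφ Z, hηZ, zero_smul, add_zero, hZ]
      have hφY : φ Y = -(φ (φ (φ Z))) := by
        have h := congrArg (⇑φ) hφφZ
        rw [map_neg, map_sub, map_smul, hφξ, smul_zero, sub_zero] at h
        rw [h, neg_neg]
      rw [hφY, map_neg, smul_neg, key2 (φ Z), hφφZ, smul_neg, neg_neg,
        smul_smul, h2half, one_smul]
      simp only [Derivation.neg_apply, Derivation.sub_apply, Derivation.smul_apply,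
        smul_eq_mul, hf]
      ring
    intro Y
    rw [hL Y, main Y, hf]
    abel
  refine ⟨⟨fwd, bwd⟩, part2, ?_⟩
  rintro ⟨σ, hσ⟩
  constructor
  · intro h0
    have h := part2 0 (by intro Y; rw [zero_mul]; exact h0 Y)
    exact h.symm
  · intro hξf Y
    have hσ' := part2 σ hσ
    rw [hσ Y, hσ', hξf, zero_mul]
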